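/- If n_l < n_u, then for any two states s, s' in the search space S the graph distance between s and s' in the search space graph equals their Hamming distance HD(s, s'). -/

import Mathlib

/-- Hamming weight of a binary string: number of coordinates equal to `true`. -/
def HW {N : ℕ} (s : Fin N → Bool) : ℕ :=
  (Finset.univ.filter fun i => s i = true).card

/-- The search space: binary strings of length `N` with Hamming weight in `[nl, nu]`. -/
def searchSpace (N nl nu : ℕ) : Finset (Fin N → Bool) :=
  Finset.univ.filter fun s => nl ≤ HW s ∧ HW s ≤ nu

/-- The search space graph: vertices are the states in the search space, with an edge
between two states iff their Hamming distance is 1. -/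
def SearchGraph (N nl nu : ℕ) :
    SimpleGraph {s : Fin N → Bool // nl ≤ HW s ∧ HW s ≤ nu} where
  Adj s s' := hammingDist s.1 s'.1 = 1
  symm := ⟨fun s s' h => by simpa [hammingDist_comm] using h⟩
  loopless := ⟨fun s h => by simp at h⟩

open Finset

lemma hammingDist_update_step {N : ℕ} (s s' : Fin N → Bool) (i : Fin N) (h : s i ≠ s' i) :
    hammingDist (Function.update s i (s' i)) s' + 1 = hammingDist s s' := by
  classical
  have hset : (Finset.univ.filter fun j => Function.update s i (s' i) j ≠ s' j)
      = (Finset.univ.filter fun j => s j ≠ s' j).erase i := by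
    ext j
    by_cases hj : j = i <;> simp [hj, Function.update_apply]
  simp only [hammingDist, hset]
  exact Finset.card_erase_add_one (by simp [h])

lemma hammingDist_update_self {N : ℕ} (s : Fin N → Bool) (i : Fin N) (b : Bool) (h : s i ≠ b) :
    hammingDist s (Function.update s i b) = 1 := by
  classical
  have hset : (Finset.univ.filter fun j => s j ≠ Function.update s i b j) = {i} := by
    ext j
    by_cases hj : j = i <;> simp [hj, Function.update_apply, h]
  simp [hammingDist, hset]

lemma HW_update_false {N : ℕ} (s : Fin N → Bool) (i : Fin N) (h : s i = true) :
    HW (Function.update s i false) + 1 = HW s := by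
  unfold HW
  have hset : (Finset.univ.filter fun j => Function.update s i false j = true)
      = (Finset.univ.filter fun j => s j = true).erase i := by
    ext j
    by_cases hj : j = i <;> simp [hj, Function.update_apply]
  rw [hset]
  exact Finset.card_erase_add_one (by simp [h])

lemma HW_update_true {N : ℕ} (s : Fin N → Bool) (i : Fin N) (h : s i = false) :
    HW (Function.update s i true) = HW s + 1 := by
  unfold HW
  have hset : (Finset.univ.filter fun j => Function.update s i true j = true)
      = insert i (Finset.univ.filter fun j => s j = true) := by
    ext j
    by_cases hj : j = i <;> simp [hj, Function.update_apply]
  rw [hset]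
  exact Finset.card_insert_of_notMem (by simp [h])

lemma HW_lt {N : ℕ} (s s' : Fin N → Bool) (hle : ∀ i, s i = true → s' i = true)
    (i : Fin N) (hi : s i = false) (hi' : s' i = true) : HW s < HW s' := by
  apply Finset.card_lt_card
  constructor
  · intro j hj
    simp only [Finset.mem_filter, Finset.mem_univ, true_and] at hj ⊢
    exact hle j hj
  · intro hsub
    have := hsub (by simp [hi'] : i ∈ _)
    simp [hi] at this

lemma exists_step {N nl nu : ℕ} (h1 : nl < nu) (s s' : Fin N → Bool)
    (hs : nl ≤ HW s ∧ HW s ≤ nu) (hs' : nl ≤ HW s' ∧ HW s' ≤ nu) (hd : s ≠ s') :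
    ∃ i, s i ≠ s' i ∧ nl ≤ HW (Function.update s i (s' i))
      ∧ HW (Function.update s i (s' i)) ≤ nu := by
  classical
  by_cases hup : (∃ i, s i = false ∧ s' i = true) ∧ HW s < nu
  · obtain ⟨⟨i, hif, hit⟩, hlt⟩ := hup
    refine ⟨i, by simp [hif, hit], ?_, ?_⟩
    · rw [hit, HW_update_true s i hif]; omega
    · rw [hit, HW_update_true s i hif]; omega
  · by_cases hdn : (∃ i, s i = true ∧ s' i = false) ∧ nl < HW s
    · obtain ⟨⟨i, hit, hif⟩, hlt⟩ := hdn
      have hw := HW_update_false s i hit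
      refine ⟨i, by simp [hif, hit], ?_, ?_⟩
      · rw [hif]; omega
      · rw [hif]; omega
    · exfalso
      push_neg at hup hdn
      by_cases hB : ∃ i, s i = false ∧ s' i = true
      · have hnu : HW s = nu := le_antisymm hs.2 (hup hB)
        have hA : ¬ ∃ i, s i = true ∧ s' i = false := by
          intro hA
          have := hdn hA
          omega
        push_neg at hA
        obtain ⟨i, hif, hit⟩ := hB
        have : HW s < HW s' := by
          apply HW_lt s s' _ i hif hit
          intro j hj
          cases hs'j : s' j with
          | true => rfl
          | false => exact absurd hs'j (hA j hj)
        omega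
      · push_neg at hB
        by_cases hA : ∃ i, s i = true ∧ s' i = false
        · have hnl : HW s = nl := by
            have := hdn hA
            omega
          obtain ⟨i, hit, hif⟩ := hA
          have : HW s' < HW s := by
            apply HW_lt s' s _ i hif hit
            intro j hj
            by_contra hj'
            have hsj : s j = false := by cases hsj : s j with
              | false => rfl
              | true => exact absurd hsj hj'
            exact absurd (hB j hsj) (by simp [hj])
          omega
        · push_neg at hA
          apply hd
          funext j
          cases hsj : s j with
          | false =>
            cases hs'j : s' j with
            | false => rfl
            | true => exact absurd (hB j hsj) (by simp [hs'j])
          | true =>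
            cases hs'j : s' j with
            | false => exact absurd (hA j hsj) (by simp [hs'j])
            | true => rfl

lemma hamming_le_walk {N nl nu : ℕ} {s s' : {s : Fin N → Bool // nl ≤ HW s ∧ HW s ≤ nu}}
    (p : (SearchGraph N nl nu).Walk s s') : hammingDist s.1 s'.1 ≤ p.length := by
  induction p with
  | nil => simp
  | @cons u v w h p ih =>
    have h1 : hammingDist u.1 v.1 = 1 := h
    calc hammingDist u.1 w.1 ≤ hammingDist u.1 v.1 + hammingDist v.1 w.1 :=
          hammingDist_triangle _ _ _
      _ ≤ 1 + p.length := by omega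
      _ = (SimpleGraph.Walk.cons h p).length := by simp [SimpleGraph.Walk.length_cons]; omega

lemma exists_walk {N nl nu : ℕ} (h1 : nl < nu) :
    ∀ d (s s' : {s : Fin N → Bool // nl ≤ HW s ∧ HW s ≤ nu}),
      hammingDist s.1 s'.1 = d → ∃ p : (SearchGraph N nl nu).Walk s s', p.length = d := by
  intro d
  induction d with
  | zero =>
    intro s s' h
    have : s = s' := Subtype.ext (hammingDist_eq_zero.mp h)
    subst this
    exact ⟨SimpleGraph.Walk.nil, rfl⟩
  | succ d ih =>
    intro s s' h
    have hne : s.1 ≠ s'.1 := by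
      intro he
      rw [he] at h
      simp at h
    obtain ⟨i, hi, hb1, hb2⟩ := exists_step h1 s.1 s'.1 s.2 s'.2 hne
    set t : {s : Fin N → Bool // nl ≤ HW s ∧ HW s ≤ nu} :=
      ⟨Function.update s.1 i (s'.1 i), hb1, hb2⟩ with ht
    have hadj : (SearchGraph N nl nu).Adj s t :=
      hammingDist_update_self s.1 i (s'.1 i) hi
    have htd : hammingDist t.1 s'.1 = d := by
      have := hammingDist_update_step s.1 s'.1 i hi
      simp only [ht]
      omega
    obtain ⟨p, hp⟩ := ih t s' htd
    exact ⟨SimpleGraph.Walk.cons hadj p, by simp [hp]⟩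

/-- If `n_l < n_u`, the graph distance between any two states of the
search space graph equals their Hamming distance. -/
theorem searchGraph_dist_eq_hammingDist (N nl nu : ℕ) (h1 : nl < nu) (h2 : nu ≤ N)
    (s s' : {s : Fin N → Bool // nl ≤ HW s ∧ HW s ≤ nu}) :
    (SearchGraph N nl nu).dist s s' = hammingDist s.1 s'.1 := by
  obtain ⟨p, hp⟩ := exists_walk h1 (hammingDist s.1 s'.1) s s' rfl
  have hr : (SearchGraph N nl nu).Reachable s s' := ⟨p⟩
  apply le_antisymm
  · rw [← hp]
    exact SimpleGraph.dist_le p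
  · obtain ⟨q, hq⟩ := hr.exists_walk_length_eq_dist
    rw [← hq]
    exact hamming_le_walk q
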